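/- Let T(x) = Ax with A = [[0,1],[−1,0]] on ℝ², φ(x) = (1/p)‖x‖_p^p with p > 2, q = p/(p−1), and let x^{k+1} satisfy ∇φ(xᵏ − x^{k+1}) = T(x^{k+1}) (the anisotropic proximal point update). Then the ℓq norm decreases: (1/q)‖x^{k+1}‖_q^q ≤ (1/q)‖xᵏ‖_q^q − D_{φ*}(T xᵏ, T x^{k+1}), where D_{φ*} is the Bregman distance of φ*(v) = (1/q)‖v‖_q^q. In particular ‖x^{k+1}‖_q ≤ ‖xᵏ‖_q. -/

import Mathlib

/-- Coordinatewise `sign(t)|t|^r`. -/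
noncomputable def sgnPow (r t : ℝ) : ℝ := Real.sign t * |t| ^ r

/-- The gradient of `(1/r)‖·‖_r^r` on `ℝ × ℝ`. -/
noncomputable def gradPow (r : ℝ) (z : ℝ × ℝ) : ℝ × ℝ :=
  (sgnPow (r - 1) z.1, sgnPow (r - 1) z.2)

/-- `φ*(v) = (1/q)‖v‖_q^q` on `ℝ × ℝ`. -/
noncomputable def phiStar (q : ℝ) (v : ℝ × ℝ) : ℝ := (1 / q) * (|v.1| ^ q + |v.2| ^ q)

/-- Euclidean inner product on `ℝ × ℝ`. -/
def dotR2 (a b : ℝ × ℝ) : ℝ := a.1 * b.1 + a.2 * b.2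

/-- Bregman distance of `φ* = (1/q)‖·‖_q^q`. -/
noncomputable def DqBreg (q : ℝ) (u v : ℝ × ℝ) : ℝ :=
  phiStar q u - phiStar q v - dotR2 (gradPow q v) (u - v)

/-- The skew-symmetric rotation `T(x₁,x₂) = (x₂, −x₁)`. -/
def Trot (x : ℝ × ℝ) : ℝ × ℝ := (x.2, -x.1)

lemma sgnPow_neg (r t : ℝ) : sgnPow r (-t) = - sgnPow r t := by
  simp [sgnPow, Real.sign_neg, abs_neg, neg_mul]

lemma sgnPow_zero (r : ℝ) : sgnPow r 0 = 0 := by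
  simp [sgnPow, Real.sign_zero]

lemma sgnPow_comp {p q : ℝ} (hpq : (p - 1) * (q - 1) = 1) (t : ℝ) :
    sgnPow (q - 1) (sgnPow (p - 1) t) = t := by
  have key : ∀ s : ℝ, 0 < s → sgnPow (q - 1) (sgnPow (p - 1) s) = s := by
    intro s hs
    have h1 : sgnPow (p - 1) s = s ^ (p - 1) := by
      rw [sgnPow, Real.sign_of_pos hs, abs_of_pos hs, one_mul]
    have h2 : (0:ℝ) < s ^ (p - 1) := Real.rpow_pos_of_pos hs _
    rw [h1, sgnPow, Real.sign_of_pos h2, abs_of_pos h2, one_mul,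
      ← Real.rpow_mul hs.le, hpq, Real.rpow_one]
  rcases lt_trichotomy t 0 with ht | ht | ht
  · have := key (-t) (by linarith)
    rw [sgnPow_neg, sgnPow_neg] at this
    linarith
  · simp [ht, sgnPow_zero]
  · exact key t ht

lemma coord_breg {q : ℝ} (hq : 1 < q) (u v : ℝ) :
    sgnPow (q - 1) v * (u - v) ≤ |u| ^ q / q - |v| ^ q / q := by
  have hq0 : (0:ℝ) < q := by linarith
  have hq1 : q - 1 ≠ 0 := by intro h; linarith [sub_eq_zero.mp h]
  have hvv : sgnPow (q - 1) v * v = |v| ^ q := by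
    rcases eq_or_ne v 0 with h | h
    · simp [h, sgnPow_zero, Real.zero_rpow hq0.ne']
    · have hsv : Real.sign v * v = |v| := by
        rcases lt_or_gt_of_ne h with hv | hv
        · rw [Real.sign_of_neg hv, abs_of_neg hv]; ring
        · rw [Real.sign_of_pos hv, abs_of_pos hv]; ring
      calc sgnPow (q - 1) v * v = |v| ^ (q - 1) * (Real.sign v * v) := by
            rw [sgnPow]; ring
        _ = |v| ^ (q - 1) * |v| := by rw [hsv]
        _ = |v| ^ (q - 1 + 1) := (Real.rpow_add_one (abs_ne_zero.mpr h) _).symm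
        _ = |v| ^ q := by norm_num
  have hconj : (q / (q - 1)).HolderConjugate q := by
    rw [Real.holderConjugate_iff]
    constructor
    · rw [lt_div_iff₀ (by linarith : (0:ℝ) < q - 1)]; linarith
    · field_simp; ring
  have hu : sgnPow (q - 1) v * u ≤ |v| ^ (q - 1) * |u| := by
    have habs : |Real.sign v * u| ≤ |u| := by
      rcases Real.sign_apply_eq v with h | h | h <;> simp [h, abs_neg]
    calc sgnPow (q - 1) v * u = |v| ^ (q - 1) * (Real.sign v * u) := by rw [sgnPow]; ring
      _ ≤ |v| ^ (q - 1) * |Real.sign v * u| :=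
          mul_le_mul_of_nonneg_left (le_abs_self _) (by positivity)
      _ ≤ |v| ^ (q - 1) * |u| := mul_le_mul_of_nonneg_left habs (by positivity)
  have hyoung := Real.young_inequality_of_nonneg (by positivity : (0:ℝ) ≤ |v| ^ (q-1))
      (abs_nonneg u) hconj
  have hpow : (|v| ^ (q - 1)) ^ (q / (q - 1)) = |v| ^ q := by
    rw [← Real.rpow_mul (abs_nonneg v)]
    congr 1
    field_simp
  rw [hpow, div_div_eq_mul_div] at hyoung
  have hzero : |v| ^ q * (q - 1) / q + |v| ^ q / q - |v| ^ q = 0 := by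
    field_simp; ring
  nlinarith [hyoung, hvv, hu]

lemma DqBreg_nonneg {q : ℝ} (hq : 1 < q) (u v : ℝ × ℝ) : 0 ≤ DqBreg q u v := by
  have h1 := coord_breg hq u.1 v.1
  have h2 := coord_breg hq u.2 v.2
  simp only [DqBreg, phiStar, dotR2, gradPow, Prod.fst_sub, Prod.snd_sub]
  have e : (1/q) * (|u.1|^q + |u.2|^q) - (1/q) * (|v.1|^q + |v.2|^q)
      = (|u.1|^q/q - |v.1|^q/q) + (|u.2|^q/q - |v.2|^q/q) := by ring
  rw [e]
  linarith

/-- Primal Fejér monotonicity in the ℓq sense for the anisotropic proximal point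
algorithm applied to the skew-symmetric operator. -/
theorem stmt19 (p q : ℝ) (hp : 2 < p) (hq : q = p / (p - 1))
    (x : ℕ → ℝ × ℝ)
    (hup : ∀ k, gradPow p (x k - x (k + 1)) = Trot (x (k + 1))) :
    ∀ k,
      (1 / q) * (|(x (k + 1)).1| ^ q + |(x (k + 1)).2| ^ q) ≤
        (1 / q) * (|(x k).1| ^ q + |(x k).2| ^ q) -
          DqBreg q (Trot (x k)) (Trot (x (k + 1))) ∧
      (|(x (k + 1)).1| ^ q + |(x (k + 1)).2| ^ q) ^ (1 / q) ≤
        (|(x k).1| ^ q + |(x k).2| ^ q) ^ (1 / q) := by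
  have hp1 : (0:ℝ) < p - 1 := by linarith
  have hq1 : 1 < q := by
    rw [hq, lt_div_iff₀ hp1]; linarith
  have hpq : (p - 1) * (q - 1) = 1 := by
    rw [hq]; field_simp; ring
  intro k
  set a := x k with ha
  set b := x (k + 1) with hb
  have hu := hup k
  have h1 : sgnPow (p - 1) (a.1 - b.1) = b.2 := congrArg Prod.fst hu
  have h2 : sgnPow (p - 1) (a.2 - b.2) = -b.1 := congrArg Prod.snd hu
  have e1 : sgnPow (q - 1) b.2 = a.1 - b.1 := by
    rw [← h1, sgnPow_comp hpq]
  have e2 : sgnPow (q - 1) (-b.1) = a.2 - b.2 := by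
    rw [← h2, sgnPow_comp hpq]
  have hD : DqBreg q (Trot a) (Trot b)
      = (1 / q) * (|a.1| ^ q + |a.2| ^ q) - (1 / q) * (|b.1| ^ q + |b.2| ^ q) := by
    simp only [DqBreg, phiStar, dotR2, gradPow, Trot, Prod.fst_sub, Prod.snd_sub, abs_neg]
    rw [e1, e2]
    ring
  constructor
  · rw [hD]; linarith
  · have hDpos : 0 ≤ DqBreg q (Trot a) (Trot b) := DqBreg_nonneg hq1 _ _
    rw [hD] at hDpos
    have hq0 : (0:ℝ) < 1 / q := by positivity
    have hle : |b.1| ^ q + |b.2| ^ q ≤ |a.1| ^ q + |a.2| ^ q := by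
      have := sub_nonneg.mp hDpos
      exact (mul_le_mul_iff_right₀ hq0).mp this
    exact Real.rpow_le_rpow (by positivity) hle hq0.le
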